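/- Let k be a field and let θ, φ ∈ k[x_1,x_2] be relatively prime homogeneous polynomials with deg θ = 2 and deg φ = 4. Then the six polynomials x_1^3θ, x_1^2x_2θ, x_1x_2^2θ, x_2^3θ, x_1φ, x_2φ are linearly independent over k (hence span the 6-dimensional space M_5 of degree-5 forms). -/

import Mathlib

open MvPolynomial

private lemma coeff_mul_homog_eq_zero {k : Type*} [Field k] {θ r : MvPolynomial (Fin 2) k} {n : ℕ}
    (hθ : θ.IsHomogeneous n) {d : Fin 2 →₀ ℕ} (hd : d.degree < n) :
    coeff d (θ * r) = 0 := by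
  rw [coeff_mul]
  apply Finset.sum_eq_zero
  rintro ⟨u, v⟩ huv
  rw [Finset.HasAntidiagonal.mem_antidiagonal] at huv
  by_cases h : coeff u θ = 0
  · simp [h]
  · exfalso
    have h1 : u.degree = n := by
      have := hθ h
      rw [Finsupp.degree_eq_weight_one]; exact this
    have h2 : d.degree = u.degree + v.degree := by
      rw [← huv]
      simp [Finsupp.degree_eq_weight_one, map_add]
    omega

theorem stmt12 {k : Type*} [Field k]
    (θ φ : MvPolynomial (Fin 2) k)
    (hθ : θ.IsHomogeneous 2) (hφ : φ.IsHomogeneous 4)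
    (hrel : IsRelPrime θ φ) :
    LinearIndependent k
      ![X 0 ^ 3 * θ, X 0 ^ 2 * X 1 * θ, X 0 * X 1 ^ 2 * θ, (X 1 : MvPolynomial (Fin 2) k) ^ 3 * θ,
        X 0 * φ, X 1 * φ] := by
  have hθ0 : θ ≠ 0 := by
    rintro rfl
    have hu : IsUnit φ := isRelPrime_zero_left.mp hrel
    obtain ⟨ψ, hψ⟩ : ∃ ψ, φ * ψ = 1 := hu.exists_right_inv
    have h0 : constantCoeff φ = 0 := hφ.coeff_eq_zero (by simp [Finsupp.degree])
    have := congrArg constantCoeff hψ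
    rw [map_mul, map_one, h0, zero_mul] at this
    exact zero_ne_one this
  rw [Fintype.linearIndependent_iff]
  intro g hg
  set p : MvPolynomial (Fin 2) k :=
    C (g 0) * X 0 ^ 3 + C (g 1) * (X 0 ^ 2 * X 1) + C (g 2) * (X 0 * X 1 ^ 2) + C (g 3) * X 1 ^ 3
    with hp
  set q : MvPolynomial (Fin 2) k := C (g 4) * X 0 + C (g 5) * X 1 with hq
  have key : p * θ + q * φ = 0 := by
    simp only [Fin.sum_univ_six, Matrix.cons_val_zero, Matrix.cons_val_one, Matrix.head_cons,
      Matrix.cons_val_two, Matrix.tail_cons, Matrix.cons_val_three, Matrix.cons_val_four,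
      smul_eq_C_mul] at hg
    rw [show ![X 0 ^ 3 * θ, X 0 ^ 2 * X 1 * θ, X 0 * X 1 ^ 2 * θ, X 1 ^ 3 * θ, X 0 * φ,
      X 1 * φ] 5 = X 1 * φ from rfl] at hg
    rw [hp, hq]
    linear_combination hg
  have hdvd : θ ∣ q := by
    refine hrel.dvd_of_dvd_mul_right ⟨-p, ?_⟩
    linear_combination key
  obtain ⟨r, hr⟩ := hdvd
  -- extract g 4 and g 5
  have hg4 : g 4 = 0 := by
    have := coeff_mul_homog_eq_zero (r := r) hθ
      (d := Finsupp.single 0 1) (by rw [Finsupp.degree_single]; norm_num)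
    rw [← hr, hq] at this
    simpa [coeff_X', Finsupp.single_eq_single_iff] using this
  have hg5 : g 5 = 0 := by
    have := coeff_mul_homog_eq_zero (r := r) hθ
      (d := Finsupp.single 1 1) (by rw [Finsupp.degree_single]; norm_num)
    rw [← hr, hq] at this
    simpa [coeff_X', Finsupp.single_eq_single_iff] using this
  have hq0 : q = 0 := by rw [hq, hg4, hg5]; simp
  have hp0 : p = 0 := by
    have : p * θ = 0 := by rw [hq0] at key; simpa using key
    rcases mul_eq_zero.mp this with h | h
    · exact h
    · exact absurd h hθ0
  -- rewrite p as sum of monomials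
  have hpm : p = monomial (Finsupp.single 0 3) (g 0)
      + monomial (Finsupp.single 0 2 + Finsupp.single 1 1) (g 1)
      + monomial (Finsupp.single 0 1 + Finsupp.single 1 2) (g 2)
      + monomial (Finsupp.single 1 3) (g 3) := by
    rw [hp]
    simp only [X, monomial_pow, monomial_mul, C_mul_monomial, one_pow, mul_one,
      Finsupp.smul_single, smul_eq_mul]
  rw [hpm] at hp0
  have hne1 : (Finsupp.single (0 : Fin 2) 3) ≠ Finsupp.single 0 2 + Finsupp.single 1 1 := by
    intro h; simpa using DFunLike.congr_fun h 1
  have hne2 : (Finsupp.single (0 : Fin 2) 3) ≠ Finsupp.single 0 1 + Finsupp.single 1 2 := by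
    intro h; simpa using DFunLike.congr_fun h 1
  have hne3 : (Finsupp.single (0 : Fin 2) 3) ≠ Finsupp.single 1 3 := by
    intro h; simpa using DFunLike.congr_fun h 0
  have hne4 : (Finsupp.single (0:Fin 2) 2 + Finsupp.single 1 1)
      ≠ Finsupp.single 0 1 + Finsupp.single 1 2 := by
    intro h; simpa using DFunLike.congr_fun h 0
  have hne5 : (Finsupp.single (0:Fin 2) 2 + Finsupp.single 1 1) ≠ Finsupp.single 1 3 := by
    intro h; simpa using DFunLike.congr_fun h 0
  have hne6 : (Finsupp.single (0:Fin 2) 1 + Finsupp.single 1 2) ≠ Finsupp.single 1 3 := by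
    intro h; simpa using DFunLike.congr_fun h 0
  have hg0 : g 0 = 0 := by
    have := congrArg (coeff (Finsupp.single 0 3)) hp0
    simpa [coeff_monomial, hne1.symm, hne2.symm, hne3.symm] using this
  have hg1 : g 1 = 0 := by
    have := congrArg (coeff (Finsupp.single 0 2 + Finsupp.single 1 1)) hp0
    simpa [coeff_monomial, hne1, hne4.symm, hne5.symm] using this
  have hg2 : g 2 = 0 := by
    have := congrArg (coeff (Finsupp.single 0 1 + Finsupp.single 1 2)) hp0
    simpa [coeff_monomial, hne2, hne4, hne6.symm] using this
  have hg3 : g 3 = 0 := by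
    have := congrArg (coeff (Finsupp.single 1 3)) hp0
    simpa [coeff_monomial, hne3, hne5, hne6] using this
  intro i
  fin_cases i <;> assumption
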